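/- For all integers n ≥ k ≥ 0, the number V(n,k) = 4^{n−k}·T(2n+1, 2k+1) equals the number of set partitions of {1,…,2n+1} into exactly 2k+1 blocks, each of odd cardinality. -/

import Mathlib

open Polynomial

/-- The numbers `V n k = 4^(n-k) * T (2n+1) (2k+1)`, where `T` are the central factorial
numbers of the second kind. -/
def V : ℕ → ℕ → ℕ
  | 0, 0 => 1
  | 0, _ + 1 => 0
  | n + 1, 0 => V n 0
  | n + 1, k + 1 => V n k + (2 * (k + 1) + 1) ^ 2 * V n (k + 1)

/-- predecessor-shifted V -/
def Vp (n : ℕ) : ℕ → ℕ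
  | 0 => 0
  | s + 1 => V n s

lemma V_succ (n s : ℕ) : V (n+1) s = Vp n s + (2*s+1)^2 * V n s := by
  cases s with
  | zero => simp [V, Vp]
  | succ s => show V n s + _ = _; simp [Vp]

lemma V_zero (s : ℕ) : V 0 s = if s = 0 then 1 else 0 := by
  cases s with
  | zero => rfl
  | succ s => rfl

def Fo (k n e : ℕ) : ℕ :=
  Nat.choose (2*k+1) (2*e) *
    ∑ t ∈ Finset.range (e+1), Nat.choose e t * (2*(k+t-e)+1).factorial * V n (k+t-e)

def Fe (k n e : ℕ) : ℕ :=
  Nat.choose (2*k+1) (2*e+1) *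
    ∑ t ∈ Finset.range (e+1), Nat.choose e t * (2*(k+t-e)).factorial * V n (k+t-e)

lemma Fo_zero (k n : ℕ) : Fo k n 0 = (2*k+1).factorial * V n k := by
  simp [Fo, Nat.factorial]

lemma Fe_zero (k n : ℕ) : Fe k n 0 = (2*k+1).factorial * V n k := by
  simp [Fe, Nat.factorial, Nat.choose_one_right]; ring

lemma E1 (k n e : ℕ) :
    Fo k n (e+1) = (2*k-2*e) * Fe k n e + (2*e+3) * Fe k n (e+1) := by
  rcases le_or_gt k e with he | he
  · have h1 : 2*k - 2*e = 0 := by omega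
    have h2 : Nat.choose (2*k+1) (2*(e+1)) = 0 := Nat.choose_eq_zero_of_lt (by omega)
    have h3 : Nat.choose (2*k+1) (2*(e+1)+1) = 0 := Nat.choose_eq_zero_of_lt (by omega)
    simp [Fo, Fe, h1, h2, h3]
  · obtain ⟨d, rfl⟩ : ∃ d, k = e + 1 + d := ⟨k - e - 1, by omega⟩
    set N := 2*(e+1+d)+1 with hN
    -- index simplifications
    have idx1 : ∀ t, e + 1 + d + t - (e+1) = d + t := fun t => by omega
    have idx2 : ∀ t, e + 1 + d + t - e = d + 1 + t := fun t => by omega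
    -- binomial absorption facts
    have b1 : (2*e+3) * Nat.choose N (2*(e+1)+1) = (2*d+1) * Nat.choose N (2*(e+1)) := by
      have := Nat.choose_succ_right_eq N (2*(e+1))
      have hsub : N - 2*(e+1) = 2*d+1 := by omega
      rw [hsub] at this
      calc (2*e+3) * Nat.choose N (2*(e+1)+1) = Nat.choose N (2*(e+1)+1) * (2*(e+1)+1) := by ring
        _ = Nat.choose N (2*(e+1)) * (2*d+1) := this
        _ = (2*d+1) * Nat.choose N (2*(e+1)) := by ring
    have b2 : (2*(e+1+d)-2*e) * Nat.choose N (2*e+1) = (2*e+2) * Nat.choose N (2*(e+1)) := by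
      have := Nat.choose_succ_right_eq N (2*e+1)
      have hsub : N - (2*e+1) = 2*d+2 := by omega
      rw [hsub] at this
      have hc : 2*(e+1+d)-2*e = 2*d+2 := by omega
      calc (2*(e+1+d)-2*e) * Nat.choose N (2*e+1) = Nat.choose N (2*e+1) * (2*d+2) := by
            rw [hc]; ring
        _ = Nat.choose N ((2*e+1)+1) * ((2*e+1)+1) := this.symm
        _ = (2*e+2) * Nat.choose N (2*(e+1)) := by ring_nf
    -- rewrite the sums with clean indices
    unfold Fo Fe
    simp only [idx1, idx2]
    rw [show (2*(e+1+d)+1) = N from rfl]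
    -- move coefficients
    rw [← mul_assoc, ← mul_assoc, b2, b1]
    rw [mul_assoc (2*e+2), mul_assoc (2*d+1), mul_left_comm (2*e+2), mul_left_comm (2*d+1),
      ← mul_add]
    congr 1
    -- now pure sum identity
    have key : ∀ t ∈ Finset.range (e+2),
        Nat.choose (e+1) t * (2*(d+t)+1).factorial * V n (d+t) =
        ((2*d+1) * (Nat.choose (e+1) t * (2*(d+t)).factorial * V n (d+t)) +
          (match t with
           | 0 => 0
           | t+1 => (2*e+2) * (Nat.choose e t * (2*(d+1+t)).factorial * V n (d+1+t)))) := by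
      intro t ht
      match t with
      | 0 => simp [Nat.factorial_succ]; ring
      | t+1 =>
        have habs : (t+1) * Nat.choose (e+1) (t+1) = (e+1) * Nat.choose e t := by
          rw [mul_comm]; exact (Nat.add_one_mul_choose_eq e t).symm
        have hfac : (2*(d+(t+1))+1).factorial = (2*(d+t)+3) * (2*(d+(t+1))).factorial := by
          have : 2*(d+(t+1))+1 = (2*(d+(t+1))) + 1 := by ring
          rw [this, Nat.factorial_succ]; ring_nf
        rw [hfac]
        have hred : (match t+1 with
           | 0 => 0
           | t+1 => (2*e+2) * (Nat.choose e t * (2*(d+1+t)).factorial * V n (d+1+t)))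
            = (2*e+2) * (Nat.choose e t * (2*(d+1+t)).factorial * V n (d+1+t)) := rfl
        rw [hred, show d+1+t = d+(t+1) by omega]
        -- goal: C(e+1,t+1) * ((2(d+t)+3) * F) * V = (2d+1) * (C(e+1,t+1)*F*V) + (2e+2)*(C(e,t)*F*V)
        have : Nat.choose (e+1) (t+1) * (2*(d+t)+3) =
            (2*d+1) * Nat.choose (e+1) (t+1) + (2*e+2) * Nat.choose e t := by
          nlinarith [habs]
        calc Nat.choose (e+1) (t+1) * ((2*(d+t)+3) * (2*(d+(t+1))).factorial) * V n (d+(t+1))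
            = (Nat.choose (e+1) (t+1) * (2*(d+t)+3)) *
              ((2*(d+(t+1))).factorial * V n (d+(t+1))) := by ring
          _ = ((2*d+1) * Nat.choose (e+1) (t+1) + (2*e+2) * Nat.choose e t) *
              ((2*(d+(t+1))).factorial * V n (d+(t+1))) := by rw [this]
          _ = _ := by ring
    rw [Finset.sum_congr rfl key, Finset.sum_add_distrib, ← Finset.mul_sum]
    have hsplit : (∑ x ∈ Finset.range (e+2), (match x with
           | 0 => (0:ℕ)
           | t+1 => (2*e+2) * (Nat.choose e t * (2*(d+1+t)).factorial * V n (d+1+t)))) =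
        (2*e+2) * ∑ x ∈ Finset.range (e+1),
          Nat.choose e x * (2*(d+1+x)).factorial * V n (d+1+x) := by
      rw [show e+2 = e+1+1 by omega, Finset.sum_range_succ']
      simp [Finset.mul_sum]
    rw [hsplit]
    simp only [show e+1+1 = e+2 by omega]
    ring


lemma choose_pred (e : ℕ) : Nat.choose (2*e+1) (2*e) = 2*e+1 := by
  have h := Nat.choose_symm (show 1 <= 2*e+1 by omega)
  rw [show 2*e+1-1 = 2*e by omega] at h
  rw [h, Nat.choose_one_right]

lemma E2 (k n e : ℕ) :
    Fe k (n+1) e = (2*k+1-2*e) * Fo k n e + (2*e+2) * Fo k n (e+1) := by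
  rcases lt_or_ge k e with he | he
  · have h1 : 2*k+1 - 2*e = 0 := by omega
    have h2 : Nat.choose (2*k+1) (2*e+1) = 0 := Nat.choose_eq_zero_of_lt (by omega)
    have h3 : Nat.choose (2*k+1) (2*(e+1)) = 0 := Nat.choose_eq_zero_of_lt (by omega)
    simp [Fo, Fe, h1, h2, h3]
  · obtain ⟨d, rfl⟩ : ∃ d, k = e + d := ⟨k - e, by omega⟩
    cases d with
    | zero =>
      simp only [Nat.add_zero]
      have idx : ∀ t, e + t - e = t := fun t => by omega
      have h3 : Nat.choose (2*e+1) (2*(e+1)) = 0 := Nat.choose_eq_zero_of_lt (by omega)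
      have hc : 2*e+1-2*e = 1 := by omega
      have hself : Nat.choose (2*e+1) (2*e+1) = 1 := Nat.choose_self _
      have hprev : Nat.choose (2*e+1) (2*e) = 2*e+1 := choose_pred e
      unfold Fo Fe
      simp only [idx, h3, hc, hself, hprev, one_mul, mul_zero, add_zero]
      have lhs_expand : ∀ t ∈ Finset.range (e+1),
          Nat.choose e t * (2*t).factorial * V (n+1) t =
          (match t with
            | 0 => 0
            | t+1 => Nat.choose e (t+1) * (2*(t+1)).factorial * V n t) +
            (2*t+1) * (Nat.choose e t * (2*t+1).factorial * V n t) := by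
        intro t _
        rw [V_succ]
        match t with
        | 0 => simp [Vp, Nat.factorial]
        | t+1 =>
          show Nat.choose e (t+1) * (2*(t+1)).factorial * (V n t + _) = _
          have hf : (2*(t+1)+1).factorial = (2*(t+1)+1) * (2*(t+1)).factorial :=
            Nat.factorial_succ _
          rw [hf]; ring
      rw [Finset.sum_congr rfl lhs_expand, Finset.sum_add_distrib]
      have hshift : (∑ t ∈ Finset.range (e+1), (match t with
            | 0 => (0:ℕ)
            | t+1 => Nat.choose e (t+1) * (2*(t+1)).factorial * V n t)) =
          ∑ t ∈ Finset.range e, Nat.choose e (t+1) * (2*(t+1)).factorial * V n t := by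
        rw [Finset.sum_range_succ']
        simp
      rw [hshift, Finset.mul_sum]
      have rhs_expand : ∀ t ∈ Finset.range (e+1),
          (2*e+1) * (Nat.choose e t * (2*t+1).factorial * V n t) =
          2*(Nat.choose e t * (e-t)) * ((2*t+1).factorial * V n t) +
            (2*t+1) * (Nat.choose e t * (2*t+1).factorial * V n t) := by
        intro t ht
        have htle : t ≤ e := by simp at ht; omega
        have hsp : 2*e+1 = 2*(e-t) + (2*t+1) := by omega
        rw [hsp]; ring
      rw [Finset.sum_congr rfl rhs_expand, Finset.sum_add_distrib]
      have hlast : (∑ t ∈ Finset.range (e+1),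
          2*(Nat.choose e t * (e-t)) * ((2*t+1).factorial * V n t)) =
          ∑ t ∈ Finset.range e, Nat.choose e (t+1) * (2*(t+1)).factorial * V n t := by
        rw [Finset.sum_range_succ]
        simp only [Nat.sub_self, mul_zero, zero_mul, add_zero]
        refine Finset.sum_congr rfl fun t ht => ?_
        have habs : Nat.choose e (t+1) * (t+1) = Nat.choose e t * (e-t) :=
          Nat.choose_succ_right_eq e t
        have hf : (2*(t+1)).factorial = (2*t+2) * (2*t+1).factorial := by
          rw [show 2*(t+1) = (2*t+1)+1 by omega, Nat.factorial_succ]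
        rw [hf, ← habs]; ring
      rw [hlast]; ring
    | succ d' =>
      have idx1 : ∀ t, e + (d'+1) + t - e = (d'+1) + t := fun t => by omega
      have idx2 : ∀ t, e + (d'+1) + t - (e+1) = d' + t := fun t => by omega
      set N := 2*(e+(d'+1))+1 with hN
      have hc : 2*(e+(d'+1))+1-2*e = 2*(d'+1)+1 := by omega
      have b1 : (2*(d'+1)+1) * Nat.choose N (2*e) = (2*e+1) * Nat.choose N (2*e+1) := by
        have h := Nat.choose_succ_right_eq N (2*e)
        have hsub : N - 2*e = 2*(d'+1)+1 := by omega
        rw [hsub] at h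
        calc (2*(d'+1)+1) * Nat.choose N (2*e) = Nat.choose N (2*e) * (2*(d'+1)+1) := by ring
          _ = Nat.choose N (2*e+1) * (2*e+1) := h.symm
          _ = (2*e+1) * Nat.choose N (2*e+1) := by ring
      have b2 : (2*e+2) * Nat.choose N (2*(e+1)) = 2*(d'+1) * Nat.choose N (2*e+1) := by
        have h := Nat.choose_succ_right_eq N (2*e+1)
        have hsub : N - (2*e+1) = 2*(d'+1) := by omega
        rw [hsub] at h
        calc (2*e+2) * Nat.choose N (2*(e+1)) = Nat.choose N ((2*e+1)+1) * ((2*e+1)+1) := by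
              rw [show 2*(e+1) = (2*e+1)+1 by omega]; ring
          _ = Nat.choose N (2*e+1) * (2*(d'+1)) := h
          _ = 2*(d'+1) * Nat.choose N (2*e+1) := by ring
      unfold Fo Fe
      simp only [idx1, idx2, hc]
      rw [show (2*(e+(d'+1))+1) = N from rfl, show N - 2*e = 2*(d'+1)+1 by omega]
      rw [← mul_assoc, ← mul_assoc, b1, b2]
      rw [mul_assoc (2*e+1), mul_assoc (2*(d'+1)), mul_left_comm (2*e+1),
        mul_left_comm (2*(d'+1)), ← mul_add]
      congr 1
      have lhs_expand : ∀ t ∈ Finset.range (e+1),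
          Nat.choose e t * (2*((d'+1)+t)).factorial * V (n+1) ((d'+1)+t) =
          Nat.choose e t * (2*((d'+1)+t)).factorial * V n (d'+t) +
            (2*((d'+1)+t)+1) * (Nat.choose e t * (2*((d'+1)+t)+1).factorial * V n ((d'+1)+t)) := by
        intro t _
        rw [V_succ]
        have hVp : Vp n ((d'+1)+t) = V n (d'+t) := by
          rw [show (d'+1) + t = (d'+t)+1 by omega]; rfl
        have hf : (2*((d'+1)+t)+1).factorial = (2*((d'+1)+t)+1) * (2*((d'+1)+t)).factorial :=
          Nat.factorial_succ _
        rw [hVp, hf]; ring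
      rw [Finset.sum_congr rfl lhs_expand, Finset.sum_add_distrib]
      -- split RHS second sum at t = 0
      have hsplit : (∑ t ∈ Finset.range (e+2),
            Nat.choose (e+1) t * (2*(d'+t)+1).factorial * V n (d'+t)) =
          (∑ t ∈ Finset.range (e+1),
            Nat.choose (e+1) (t+1) * (2*((d'+1)+t)+1).factorial * V n ((d'+1)+t)) +
            (2*d'+1).factorial * V n d' := by
        rw [show e+2 = e+1+1 by omega, Finset.sum_range_succ']
        congr 1
        · exact Finset.sum_congr rfl fun t _ => by
            rw [show d'+(t+1) = d'+1+t from by omega]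
        · simp
      rw [hsplit]
      -- split LHS first sum at t = 0
      have hfirst : (∑ t ∈ Finset.range (e+1),
            Nat.choose e t * (2*((d'+1)+t)).factorial * V n (d'+t)) =
          (∑ t ∈ Finset.range e,
            Nat.choose e (t+1) * (2*((d'+1)+t)+2).factorial * V n ((d'+1)+t)) +
            (2*(d'+1)).factorial * V n d' := by
        rw [Finset.sum_range_succ']
        congr 1
        · exact Finset.sum_congr rfl fun t _ => by
            rw [show d'+(t+1) = d'+1+t from by omega,
              show 2*(d'+1+(t+1)) = 2*(d'+1+t)+2 from by omega]
        · simp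
      rw [hfirst]
      -- extend range e sum to range (e+1): top term vanishes
      have hext : (∑ t ∈ Finset.range e,
            Nat.choose e (t+1) * (2*((d'+1)+t)+2).factorial * V n ((d'+1)+t)) =
          ∑ t ∈ Finset.range (e+1),
            Nat.choose e (t+1) * (2*((d'+1)+t)+2).factorial * V n ((d'+1)+t) := by
        rw [Finset.sum_range_succ, Nat.choose_succ_self, zero_mul, zero_mul, add_zero]
      rw [hext]
      -- absorb the extra terms
      have hd2 : 2*(d'+1) * ((2*d'+1).factorial * V n d') = (2*(d'+1)).factorial * V n d' := by
        have hfe : (2*(d'+1)).factorial = (2*(d'+1)) * (2*d'+1).factorial := by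
          rw [show 2*(d'+1) = (2*d'+1)+1 by omega, Nat.factorial_succ]
        rw [hfe]; ring
      -- per-term identity
      have key : ∀ t ∈ Finset.range (e+1),
          Nat.choose e (t+1) * (2*((d'+1)+t)+2).factorial * V n ((d'+1)+t) +
            (2*((d'+1)+t)+1) * (Nat.choose e t * (2*((d'+1)+t)+1).factorial * V n ((d'+1)+t)) =
          (2*e+1) * (Nat.choose e t * (2*((d'+1)+t)+1).factorial * V n ((d'+1)+t)) +
            2*(d'+1) * (Nat.choose (e+1) (t+1) * (2*((d'+1)+t)+1).factorial * V n ((d'+1)+t)) := by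
        intro t ht
        have htle : t ≤ e := by simp at ht; omega
        have pascal : Nat.choose (e+1) (t+1) = Nat.choose e t + Nat.choose e (t+1) :=
          Nat.choose_succ_succ e t
        have habs : Nat.choose e (t+1) * (t+1) = Nat.choose e t * (e-t) :=
          Nat.choose_succ_right_eq e t
        have hf : (2*((d'+1)+t)+2).factorial = (2*((d'+1)+t)+2) * (2*((d'+1)+t)+1).factorial := by
          rw [show 2*((d'+1)+t)+2 = (2*((d'+1)+t)+1)+1 by omega, Nat.factorial_succ]
        rw [hf, pascal]
        have hcoef : Nat.choose e (t+1) * (2*((d'+1)+t)+2) + Nat.choose e t * (2*((d'+1)+t)+1) =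
            (2*e+1) * Nat.choose e t + 2*(d'+1) * (Nat.choose e t + Nat.choose e (t+1)) := by
          have h1 : Nat.choose e (t+1) * (2*((d'+1)+t)+2) =
              Nat.choose e (t+1) * (2*(d'+1)) + (Nat.choose e t * (e-t)) * 2 := by
            rw [← habs]; ring
          have h2 : (2*e+1) * Nat.choose e t =
              (Nat.choose e t * (e-t)) * 2 + Nat.choose e t * (2*t+1) := by
            have hsp : 2*e+1 = 2*(e-t) + (2*t+1) := by omega
            rw [hsp]; ring
          rw [h1, h2, show 2*((d'+1)+t)+1 = 2*(d'+1) + (2*t+1) from by omega]; ring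
        calc Nat.choose e (t+1) * ((2*((d'+1)+t)+2) * (2*((d'+1)+t)+1).factorial) * V n ((d'+1)+t) +
              (2*((d'+1)+t)+1) * (Nat.choose e t * (2*((d'+1)+t)+1).factorial * V n ((d'+1)+t))
            = (Nat.choose e (t+1) * (2*((d'+1)+t)+2) + Nat.choose e t * (2*((d'+1)+t)+1)) *
              ((2*((d'+1)+t)+1).factorial * V n ((d'+1)+t)) := by ring
          _ = ((2*e+1) * Nat.choose e t + 2*(d'+1) * (Nat.choose e t + Nat.choose e (t+1))) *
              ((2*((d'+1)+t)+1).factorial * V n ((d'+1)+t)) := by rw [hcoef]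
          _ = _ := by ring
      -- assemble
      have lhs_regroup :
          ((∑ t ∈ Finset.range (e+1),
              Nat.choose e (t+1) * (2*((d'+1)+t)+2).factorial * V n ((d'+1)+t)) +
            (2*(d'+1)).factorial * V n d') +
          (∑ t ∈ Finset.range (e+1),
            (2*((d'+1)+t)+1) * (Nat.choose e t * (2*((d'+1)+t)+1).factorial * V n ((d'+1)+t))) =
          (∑ t ∈ Finset.range (e+1),
            (Nat.choose e (t+1) * (2*((d'+1)+t)+2).factorial * V n ((d'+1)+t) +
              (2*((d'+1)+t)+1) * (Nat.choose e t * (2*((d'+1)+t)+1).factorial * V n ((d'+1)+t)))) +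
            (2*(d'+1)).factorial * V n d' := by
        rw [Finset.sum_add_distrib]; ring
      rw [lhs_regroup, Finset.sum_congr rfl key, Finset.sum_add_distrib, ← hd2,
        ← Finset.mul_sum, ← Finset.mul_sum]
      ring

/-- transfer recursion: number of functions `Fin m → Fin j` with exactly `e` even fibers -/
def MR (j : ℕ) : ℕ → ℕ → ℕ
  | 0, e => if e = j then 1 else 0
  | m+1, 0 => MR j m 1
  | m+1, e+1 => (j - e) * MR j m e + (e+2) * MR j m (e+2)

lemma Fe_base (k e : ℕ) : Fe k 0 e = if e = k then 1 else 0 := by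
  rcases lt_trichotomy e k with h | h | h
  · rw [if_neg (by omega)]
    unfold Fe
    have : ∀ t ∈ Finset.range (e+1), Nat.choose e t * (2*(k+t-e)).factorial * V 0 (k+t-e) = 0 := by
      intro t ht
      have h1 : k+t-e ≠ 0 := by simp at ht; omega
      rw [V_zero, if_neg h1, mul_zero]
    rw [Finset.sum_congr rfl this]
    simp
  · subst h
    rw [if_pos rfl]
    unfold Fe
    rw [Nat.choose_self]
    have : ∀ t ∈ Finset.range (e+1), Nat.choose e t * (2*(e+t-e)).factorial * V 0 (e+t-e) =
        if t = 0 then 1 else 0 := by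
      intro t ht
      have hidx : e+t-e = t := by omega
      rw [hidx, V_zero]
      rcases Nat.eq_zero_or_pos t with rfl | hp
      · simp [Nat.factorial]
      · rw [if_neg (by omega)]; simp
    rw [Finset.sum_congr rfl this, Finset.sum_ite_eq' (Finset.range (e+1)) 0]
    simp
  · rw [if_neg (by omega)]
    unfold Fe
    rw [Nat.choose_eq_zero_of_lt (by omega), zero_mul]

lemma MR_levels (k : ℕ) : ∀ n : ℕ,
    (∀ e, MR (2*k+1) (2*n) (2*e+1) = Fe k n e) ∧ (∀ e, MR (2*k+1) (2*n) (2*e) = 0) := by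
  have odd_level : ∀ n : ℕ,
      (∀ e, MR (2*k+1) (2*n) (2*e+1) = Fe k n e) → (∀ e, MR (2*k+1) (2*n) (2*e) = 0) →
      (∀ e, MR (2*k+1) (2*n+1) (2*e) = Fo k n e) ∧ (∀ e, MR (2*k+1) (2*n+1) (2*e+1) = 0) := by
    intro n he hz
    constructor
    · intro e
      cases e with
      | zero =>
        show MR (2*k+1) ((2*n)+1) 0 = _
        rw [MR]
        have := he 0
        rw [show (2*0+1 : ℕ) = 1 from rfl] at this
        rw [this, Fe_zero, Fo_zero]
      | succ e' =>
        have hrw : MR (2*k+1) (2*n+1) (2*(e'+1)) =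
            (2*k+1 - (2*e'+1)) * MR (2*k+1) (2*n) (2*e'+1) +
              (2*e'+1+2) * MR (2*k+1) (2*n) (2*e'+1+2) := by
          rw [show 2*(e'+1) = (2*e'+1)+1 by omega]
          rw [MR]
        rw [hrw, he e', show 2*e'+1+2 = 2*(e'+1)+1 by omega, he (e'+1),
          show 2*k+1-(2*e'+1) = 2*k-2*e' by omega]
        rw [show 2*(e'+1)+1 = 2*e'+3 by omega]
        exact (E1 k n e').symm
    · intro e
      have hrw : MR (2*k+1) (2*n+1) (2*e+1) =
          (2*k+1 - (2*e)) * MR (2*k+1) (2*n) (2*e) + (2*e+2) * MR (2*k+1) (2*n) (2*e+2) := by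
        rw [MR]
      rw [hrw, hz e, show 2*e+2 = 2*(e+1) by omega, hz (e+1)]
      simp
  intro n
  induction n with
  | zero =>
    constructor
    · intro e
      show MR (2*k+1) 0 (2*e+1) = _
      rw [MR, Fe_base]
      by_cases h : e = k
      · rw [if_pos (by omega), if_pos h]
      · rw [if_neg (by omega), if_neg h]
    · intro e
      show MR (2*k+1) 0 (2*e) = 0
      rw [MR, if_neg (by omega)]
  | succ n ih =>
    obtain ⟨ho, hoz⟩ := odd_level n ih.1 ih.2
    constructor
    · intro e
      have hrw : MR (2*k+1) (2*(n+1)) (2*e+1) =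
          (2*k+1 - 2*e) * MR (2*k+1) (2*n+1) (2*e) + (2*e+2) * MR (2*k+1) (2*n+1) (2*e+2) := by
        rw [show 2*(n+1) = (2*n+1)+1 by omega]
        rw [MR]
      rw [hrw, ho e, show 2*e+2 = 2*(e+1) by omega, ho (e+1)]
      exact (E2 k n e).symm
    · intro e
      cases e with
      | zero =>
        show MR (2*k+1) ((2*n+1)+1) 0 = 0
        rw [MR]
        have := hoz 0
        rw [show (2*0+1 : ℕ) = 1 from rfl] at this
        rw [this]
      | succ e' =>
        have hrw : MR (2*k+1) (2*(n+1)) (2*(e'+1)) =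
            (2*k+1 - (2*e'+1)) * MR (2*k+1) (2*n+1) (2*e'+1) +
              (2*e'+1+2) * MR (2*k+1) (2*n+1) (2*e'+1+2) := by
          rw [show 2*(n+1) = (2*n+1)+1 by omega, show 2*(e'+1) = (2*e'+1)+1 by omega]
          rw [MR]
        rw [hrw, hoz e', show 2*e'+1+2 = 2*(e'+1)+1 by omega, hoz (e'+1)]
        simp

theorem MR_V (k n : ℕ) : MR (2*k+1) (2*n+1) 0 = (2*k+1).factorial * V n k := by
  obtain ⟨h, _⟩ := (MR_levels k n)
  show MR (2*k+1) ((2*n)+1) 0 = _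
  rw [MR]
  have := h 0
  rw [show (2*0+1 : ℕ) = 1 from rfl] at this
  rw [this, Fe_zero]

section CountFunctions

variable {m j : ℕ}

/-- cardinality of the fiber of `f` over `i` -/
def ffib (f : Fin m → Fin j) (i : Fin j) : ℕ := (Finset.univ.filter fun x => f x = i).card

/-- number of even fibers of `f` -/
def fecnt (f : Fin m → Fin j) : ℕ := (Finset.univ.filter fun i => Even (ffib f i)).card

lemma ffib_snoc (f : Fin m → Fin j) (a i : Fin j) :
    ffib (Fin.snoc f a) i = ffib f i + if i = a then 1 else 0 := by
  unfold ffib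
  rw [Fin.univ_castSuccEmb, Finset.filter_cons]
  have hmap : (((Finset.univ : Finset (Fin m)).map Fin.castSuccEmb).filter
      fun x : Fin (m+1) => Fin.snoc (α := fun _ => Fin j) f a x = i) =
      (Finset.univ.filter fun x : Fin m => f x = i).map Fin.castSuccEmb := by
    rw [Finset.filter_map]
    congr 1
    refine Finset.filter_congr fun x _ => ?_
    have h : (Fin.castSuccEmb x : Fin (m+1)) = Fin.castSucc x := rfl
    show Fin.snoc (α := fun _ => Fin j) f a (Fin.castSuccEmb x) = i ↔ f x = i
    rw [h, Fin.snoc_castSucc]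
  by_cases h : a = i
  · rw [if_pos (by simp [Fin.snoc_last, h]), if_pos h.symm]
    rw [Finset.card_cons, hmap, Finset.card_map]
  · rw [if_neg (by simp [Fin.snoc_last, h]), if_neg (fun hh => h hh.symm)]
    rw [hmap, Finset.card_map, add_zero]

lemma fecnt_snoc_even (f : Fin m → Fin j) (a : Fin j) (h : Even (ffib f a)) :
    fecnt (Fin.snoc f a) + 1 = fecnt f := by
  unfold fecnt
  have hset : (Finset.univ.filter fun i => Even (ffib (Fin.snoc f a) i)) =
      (Finset.univ.filter fun i => Even (ffib f i)).erase a := by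
    ext i
    simp only [Finset.mem_filter, Finset.mem_univ, true_and, Finset.mem_erase, ffib_snoc]
    by_cases hia : i = a
    · subst hia
      simp [Nat.even_add_one, h]
    · simp [hia]
  rw [hset, Finset.card_erase_add_one (by simp [h])]

lemma fecnt_snoc_odd (f : Fin m → Fin j) (a : Fin j) (h : ¬ Even (ffib f a)) :
    fecnt (Fin.snoc f a) = fecnt f + 1 := by
  unfold fecnt
  have hset : (Finset.univ.filter fun i => Even (ffib (Fin.snoc f a) i)) =
      insert a (Finset.univ.filter fun i => Even (ffib f i)) := by
    ext i
    simp only [Finset.mem_filter, Finset.mem_univ, true_and, Finset.mem_insert, ffib_snoc]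
    by_cases hia : i = a
    · subst hia
      simp [Nat.even_add_one, h]
    · simp [hia]
  rw [hset, Finset.card_insert_of_notMem (by simp [h])]

lemma inner_count (f : Fin m → Fin j) (e : ℕ) :
    (Finset.univ.filter fun a : Fin j => fecnt (Fin.snoc f a) = e).card =
      (if fecnt f = e + 1 then e + 1 else 0) + (if fecnt f + 1 = e then j - fecnt f else 0) := by
  by_cases h1 : fecnt f = e + 1
  · rw [if_pos h1, if_neg (by omega)]
    have hset : (Finset.univ.filter fun a : Fin j => fecnt (Fin.snoc f a) = e) =
        (Finset.univ.filter fun a => Even (ffib f a)) := by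
      ext a
      simp only [Finset.mem_filter, Finset.mem_univ, true_and]
      constructor
      · intro hc
        by_contra hodd
        rw [fecnt_snoc_odd f a hodd] at hc
        omega
      · intro hev
        have := fecnt_snoc_even f a hev
        omega
    rw [hset, add_zero]
    show fecnt f = e + 1
    exact h1
  · rw [if_neg h1]
    by_cases h2 : fecnt f + 1 = e
    · rw [if_pos h2]
      have hset : (Finset.univ.filter fun a : Fin j => fecnt (Fin.snoc f a) = e) =
          (Finset.univ.filter fun a => ¬ Even (ffib f a)) := by
        ext a
        simp only [Finset.mem_filter, Finset.mem_univ, true_and]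
        constructor
        · intro hc hev
          have := fecnt_snoc_even f a hev
          omega
        · intro hodd
          rw [fecnt_snoc_odd f a hodd]
          omega
      rw [hset, Finset.filter_not, Finset.card_sdiff_of_subset (Finset.filter_subset _ _)]
      simp [fecnt]
    · rw [if_neg h2]
      have hset : (Finset.univ.filter fun a : Fin j => fecnt (Fin.snoc f a) = e) = ∅ := by
        ext a
        simp only [Finset.mem_filter, Finset.mem_univ, true_and, Finset.notMem_empty,
          iff_false]
        intro hc
        by_cases hev : Even (ffib f a)
        · have := fecnt_snoc_even f a hev
          omega
        · have := fecnt_snoc_odd f a hev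
          omega
      rw [hset]
      simp

/-- the equivalence separating the last value -/
def snocE (m j : ℕ) : ((Fin m → Fin j) × Fin j) ≃ (Fin (m+1) → Fin j) where
  toFun p := Fin.snoc p.1 p.2
  invFun g := (fun i => g i.castSucc, g (Fin.last m))
  left_inv p := by
    obtain ⟨f, a⟩ := p
    dsimp only
    rw [Prod.mk.injEq]
    constructor
    · funext i; simp
    · simp
  right_inv g := by
    funext i
    refine Fin.lastCases ?_ ?_ i
    · simp
    · intro i; simp

lemma card_fecnt (j : ℕ) : ∀ m e : ℕ,
    (Finset.univ.filter fun f : Fin m → Fin j => fecnt f = e).card = MR j m e := by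
  intro m
  induction m with
  | zero =>
    intro e
    have huniv : ∀ f : Fin 0 → Fin j, fecnt f = j := by
      intro f
      unfold fecnt
      have : ∀ i : Fin j, Even (ffib f i) := by
        intro i
        unfold ffib
        have : (Finset.univ : Finset (Fin 0)) = ∅ := by simp
        simp
      rw [Finset.filter_true_of_mem (fun i _ => this i)]
      simp
    rw [MR]
    by_cases h : e = j
    · rw [if_pos h, Finset.filter_true_of_mem (fun f _ => by rw [huniv f, h]),
        Finset.card_univ]
      simp
    · rw [if_neg h]
      rw [Finset.filter_false_of_mem (fun f _ => by rw [huniv f]; omega)]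
      simp
  | succ m ih =>
    intro e
    -- count over pairs using the equivalence
    have hcard : (Finset.univ.filter fun g : Fin (m+1) → Fin j => fecnt g = e).card =
        ∑ f : Fin m → Fin j,
          (Finset.univ.filter fun a : Fin j => fecnt (Fin.snoc f a) = e).card := by
      rw [Finset.card_filter]
      rw [← Equiv.sum_comp (snocE m j) (fun g => if fecnt g = e then (1:ℕ) else 0)]
      rw [Fintype.sum_prod_type]
      refine Finset.sum_congr rfl fun f _ => ?_
      rw [Finset.card_filter]
      rfl
    rw [hcard]
    have : ∀ f : Fin m → Fin j,
        (Finset.univ.filter fun a : Fin j => fecnt (Fin.snoc f a) = e).card =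
        (if fecnt f = e + 1 then e + 1 else 0) + (if fecnt f + 1 = e then j - fecnt f else 0) :=
      fun f => inner_count f e
    rw [Finset.sum_congr rfl fun f _ => this f, Finset.sum_add_distrib]
    have hA : (∑ f : Fin m → Fin j, if fecnt f = e + 1 then e + 1 else 0) =
        (e+1) * MR j m (e+1) := by
      rw [← ih (e+1), ← Finset.sum_filter, Finset.sum_const, smul_eq_mul, mul_comm]
    rw [hA]
    cases e with
    | zero =>
      rw [MR]
      have hB : (∑ f : Fin m → Fin j, if fecnt f + 1 = 0 then j - fecnt f else 0) = 0 := by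
        refine Finset.sum_eq_zero fun f _ => ?_
        rw [if_neg (by omega)]
      rw [hB]; norm_num
    | succ e' =>
      rw [MR]
      have hB : (∑ f : Fin m → Fin j, if fecnt f + 1 = e' + 1 then j - fecnt f else 0) =
          (j - e') * MR j m e' := by
        have hcong : ∀ f : Fin m → Fin j,
            (if fecnt f + 1 = e' + 1 then j - fecnt f else 0) =
            (if fecnt f = e' then j - e' else 0) := by
          intro f
          by_cases h : fecnt f = e'
          · rw [if_pos (by omega), if_pos h, h]
          · rw [if_neg (by omega), if_neg h]
        rw [Finset.sum_congr rfl fun f _ => hcong f, ← Finset.sum_filter,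
          Finset.sum_const, smul_eq_mul, mul_comm, ih e']
      rw [hB]
      have : e' + 1 + 1 = e' + 2 := by omega
      rw [this]
      ring

end CountFunctions

section PartB

open Finset

variable {m j : ℕ}

/-- the partition of `Fin m` into fibers of `f` -/
def fibPart (f : Fin m → Fin j) : Finpartition (Finset.univ : Finset (Fin m)) :=
  letI : DecidableRel ⇑(Setoid.ker f) := fun a b => inferInstanceAs (Decidable (f a = f b))
  Finpartition.ofSetoid (Setoid.ker f)

lemma mem_part_fibPart (f : Fin m → Fin j) (x y : Fin m) :
    y ∈ (fibPart f).part x ↔ f x = f y := by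
  letI : DecidableRel ⇑(Setoid.ker f) := fun a b => inferInstanceAs (Decidable (f a = f b))
  unfold fibPart
  rw [Finpartition.mem_part_ofSetoid_iff_rel]
  rfl

lemma part_fibPart (f : Fin m → Fin j) (x : Fin m) :
    (fibPart f).part x = Finset.univ.filter fun y => f y = f x := by
  ext y
  rw [mem_part_fibPart, Finset.mem_filter]
  constructor
  · intro h; exact ⟨Finset.mem_univ y, h.symm⟩
  · intro h; exact h.2.symm

lemma parts_eq_image_part (P : Finpartition (Finset.univ : Finset (Fin m))) :
    P.parts = Finset.univ.image P.part := by
  ext B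
  simp only [Finset.mem_image, Finset.mem_univ, true_and]
  constructor
  · intro hB
    obtain ⟨x, hx⟩ := P.nonempty_of_mem_parts hB
    exact ⟨x, P.part_eq_of_mem hB hx⟩
  · rintro ⟨x, rfl⟩
    exact P.part_mem.2 (Finset.mem_univ x)

lemma fibPart_parts (f : Fin m → Fin j) (hf : ∀ i, Odd (ffib f i)) :
    (fibPart f).parts =
      (Finset.univ : Finset (Fin j)).image (fun i => Finset.univ.filter fun y => f y = i) := by
  rw [parts_eq_image_part]
  ext B
  simp only [Finset.mem_image, Finset.mem_univ, true_and]
  constructor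
  · rintro ⟨x, rfl⟩
    exact ⟨f x, (part_fibPart f x).symm⟩
  · rintro ⟨i, rfl⟩
    have hne : (Finset.univ.filter fun y => f y = i).Nonempty := by
      rw [← Finset.card_pos]
      exact (hf i).pos
    obtain ⟨x, hx⟩ := hne
    rw [Finset.mem_filter] at hx
    refine ⟨x, ?_⟩
    rw [part_fibPart, hx.2]

lemma fibPart_parts_card (f : Fin m → Fin j) (hf : ∀ i, Odd (ffib f i)) :
    (fibPart f).parts.card = j := by
  rw [fibPart_parts f hf, Finset.card_image_of_injOn, Finset.card_univ, Fintype.card_fin]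
  intro i _ i' _ hii
  have hii' : (Finset.univ.filter fun y => f y = i) = (Finset.univ.filter fun y => f y = i') :=
    hii
  have hne : (Finset.univ.filter fun y => f y = i).Nonempty := by
    rw [← Finset.card_pos]
    exact (hf i).pos
  obtain ⟨x, hx⟩ := hne
  have hx' : x ∈ Finset.univ.filter fun y => f y = i' := by rw [← hii']; exact hx
  rw [Finset.mem_filter] at hx hx'
  rw [← hx.2, hx'.2]

lemma fibPart_parts_odd (f : Fin m → Fin j) (hf : ∀ i, Odd (ffib f i)) :
    ∀ B ∈ (fibPart f).parts, Odd B.card := by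
  intro B hB
  rw [fibPart_parts f hf] at hB
  simp only [Finset.mem_image, Finset.mem_univ, true_and] at hB
  obtain ⟨i, rfl⟩ := hB
  exact hf i

/-- the subtype of good partitions -/
def GoodParts (m j : ℕ) :=
  {P : Finpartition (Finset.univ : Finset (Fin m)) // P.parts.card = j ∧ ∀ B ∈ P.parts, Odd B.card}

/-- a labelling of the parts of a good partition -/
noncomputable def plabel (p : GoodParts m j) : ↥p.1.parts ≃ Fin j :=
  Fintype.equivFinOfCardEq (by rw [Fintype.card_coe, p.2.1])

/-- reconstruct a function from a good partition and a permutation -/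
noncomputable def fOf (p : GoodParts m j) (σ : Equiv.Perm (Fin j)) : Fin m → Fin j :=
  fun x => σ (plabel p ⟨p.1.part x, p.1.part_mem.2 (Finset.mem_univ x)⟩)

lemma fOf_fiber (p : GoodParts m j) (σ : Equiv.Perm (Fin j)) (i : Fin j) :
    (Finset.univ.filter fun x => fOf p σ x = i) = ((plabel p).symm (σ.symm i)).1 := by
  ext x
  rw [Finset.mem_filter]
  unfold fOf
  constructor
  · rintro ⟨-, hx⟩
    have h1 : (⟨p.1.part x, p.1.part_mem.2 (Finset.mem_univ x)⟩ : ↥p.1.parts) =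
        (plabel p).symm (σ.symm i) := by
      apply (plabel p).injective
      rw [Equiv.apply_symm_apply]
      exact (Equiv.eq_symm_apply σ).mpr hx
    have h2 : p.1.part x = ((plabel p).symm (σ.symm i)).1 := congrArg Subtype.val h1
    rw [← h2]
    exact p.1.mem_part (Finset.mem_univ x)
  · intro hx
    refine ⟨Finset.mem_univ x, ?_⟩
    have h2 : p.1.part x = ((plabel p).symm (σ.symm i)).1 :=
      p.1.part_eq_of_mem ((plabel p).symm (σ.symm i)).2 hx
    have h3 : (⟨p.1.part x, p.1.part_mem.2 (Finset.mem_univ x)⟩ : ↥p.1.parts) =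
        (plabel p).symm (σ.symm i) := Subtype.ext h2
    rw [h3, Equiv.apply_symm_apply, Equiv.apply_symm_apply]

lemma fOf_odd (p : GoodParts m j) (σ : Equiv.Perm (Fin j)) :
    ∀ i, Odd (ffib (fOf p σ) i) := by
  intro i
  unfold ffib
  rw [fOf_fiber]
  exact p.2.2 _ ((plabel p).symm (σ.symm i)).2

lemma fibPart_fOf (p : GoodParts m j) (σ : Equiv.Perm (Fin j)) :
    fibPart (fOf p σ) = p.1 := by
  have hpart : ∀ x, (fibPart (fOf p σ)).part x = p.1.part x := by
    intro x
    rw [part_fibPart]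
    ext y
    rw [Finset.mem_filter]
    constructor
    · rintro ⟨-, hy⟩
      -- fOf p σ y = fOf p σ x → same part
      unfold fOf at hy
      have h1 : (⟨p.1.part y, p.1.part_mem.2 (Finset.mem_univ y)⟩ : ↥p.1.parts) =
          ⟨p.1.part x, p.1.part_mem.2 (Finset.mem_univ x)⟩ :=
        (plabel p).injective (σ.injective hy)
      have h2 : p.1.part y = p.1.part x := congrArg Subtype.val h1
      rw [← h2]
      exact p.1.mem_part (Finset.mem_univ y)
    · intro hy
      refine ⟨Finset.mem_univ y, ?_⟩
      have h2 : p.1.part y = p.1.part x :=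
        (p.1.mem_part_iff_part_eq_part (Finset.mem_univ y) (Finset.mem_univ x)).mp hy
      unfold fOf
      rw [show (⟨p.1.part y, p.1.part_mem.2 (Finset.mem_univ y)⟩ : ↥p.1.parts) =
          ⟨p.1.part x, p.1.part_mem.2 (Finset.mem_univ x)⟩ from Subtype.ext h2]
  apply Finpartition.ext
  rw [parts_eq_image_part, parts_eq_image_part]
  exact Finset.image_congr fun x _ => hpart x

/-- the full map -/
noncomputable def Psi (m j : ℕ) : GoodParts m j × Equiv.Perm (Fin j) →
    {f : Fin m → Fin j // ∀ i, Odd (ffib f i)} :=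
  fun q => ⟨fOf q.1 q.2, fOf_odd q.1 q.2⟩

lemma Psi_bijective (m j : ℕ) : Function.Bijective (Psi m j) := by
  constructor
  · rintro ⟨p, σ⟩ ⟨p', σ'⟩ hq
    have hf : fOf p σ = fOf p' σ' := congrArg Subtype.val hq
    have hp : p = p' := by
      apply Subtype.ext
      rw [← fibPart_fOf p σ, ← fibPart_fOf p' σ', hf]
    subst hp
    have hσ : σ = σ' := by
      apply Equiv.ext
      intro ℓ
      set B := (plabel p).symm ℓ with hB
      have hne : B.1.Nonempty := p.1.nonempty_of_mem_parts B.2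
      set x := B.1.min' hne with hx
      have hxB : x ∈ B.1 := B.1.min'_mem hne
      have hpart : p.1.part x = B.1 := p.1.part_eq_of_mem B.2 hxB
      have hlab : (⟨p.1.part x, p.1.part_mem.2 (Finset.mem_univ x)⟩ : ↥p.1.parts) = B :=
        Subtype.ext hpart
      have h1 : fOf p σ x = σ ℓ := by
        unfold fOf
        rw [hlab, hB, Equiv.apply_symm_apply]
      have h2 : fOf p σ' x = σ' ℓ := by
        unfold fOf
        rw [hlab, hB, Equiv.apply_symm_apply]
      rw [← h1, ← h2, hf]
    rw [hσ]
  · rintro ⟨f, hf⟩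
    -- build the partition and the permutation
    set p : GoodParts m j := ⟨fibPart f, fibPart_parts_card f hf, fibPart_parts_odd f hf⟩
      with hp
    have hσ0inj : Function.Injective (fun ℓ : Fin j =>
        f (((plabel p).symm ℓ).1.min' (p.1.nonempty_of_mem_parts ((plabel p).symm ℓ).2))) := by
      intro ℓ ℓ' hll
      dsimp only at hll
      set B := (plabel p).symm ℓ with hBdef
      set B' := (plabel p).symm ℓ' with hB'def
      have hBne : B.1.Nonempty := p.1.nonempty_of_mem_parts B.2
      have hB'ne : B'.1.Nonempty := p.1.nonempty_of_mem_parts B'.2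
      have hxB : B.1.min' hBne ∈ B.1 := B.1.min'_mem hBne
      have hxB' : B'.1.min' hB'ne ∈ B'.1 := B'.1.min'_mem hB'ne
      have h1 : (fibPart f).part (B.1.min' hBne) = B.1 := (fibPart f).part_eq_of_mem B.2 hxB
      have h2 : (fibPart f).part (B'.1.min' hB'ne) = B'.1 :=
        (fibPart f).part_eq_of_mem B'.2 hxB'
      have h3 : (fibPart f).part (B.1.min' hBne) = (fibPart f).part (B'.1.min' hB'ne) := by
        rw [part_fibPart, part_fibPart, hll]
      have hBB : B = B' := Subtype.ext (by rw [← h1, ← h2, h3])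
      have := congrArg (plabel p) hBB
      rwa [Equiv.apply_symm_apply, Equiv.apply_symm_apply] at this
    set σ0 : Equiv.Perm (Fin j) :=
      Equiv.ofBijective _ ((Finite.injective_iff_bijective).mp hσ0inj) with hσ0
    refine ⟨⟨p, σ0⟩, ?_⟩
    apply Subtype.ext
    show fOf p σ0 = f
    funext x
    have haux : ∀ ℓ, σ0 ℓ =
        f (((plabel p).symm ℓ).1.min' (p.1.nonempty_of_mem_parts ((plabel p).symm ℓ).2)) :=
      fun ℓ => rfl
    rw [show fOf p σ0 x = σ0 (plabel p ⟨p.1.part x, p.1.part_mem.2 (Finset.mem_univ x)⟩) from rfl,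
      haux]
    simp only [Equiv.symm_apply_apply]
    have h2 : ((fibPart f).part x).min'
        ((fibPart f).nonempty_of_mem_parts ((fibPart f).part_mem.2 (Finset.mem_univ x)))
        ∈ (fibPart f).part x := Finset.min'_mem _ _
    rw [mem_part_fibPart] at h2
    exact h2.symm

lemma card_odd_fiber_functions (m j : ℕ) :
    Nat.card {f : Fin m → Fin j // ∀ i, Odd (ffib f i)} =
      j.factorial * Nat.card (GoodParts m j) := by
  rw [← Nat.card_eq_of_bijective (Psi m j) (Psi_bijective m j), Nat.card_prod]
  rw [Nat.card_eq_fintype_card (α := Equiv.Perm (Fin j)), Fintype.card_perm, Fintype.card_fin]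
  ring

end PartB

lemma fecnt_zero_iff {m j : ℕ} (f : Fin m → Fin j) :
    fecnt f = 0 ↔ ∀ i, Odd (ffib f i) := by
  unfold fecnt
  rw [Finset.card_eq_zero, Finset.filter_eq_empty_iff]
  constructor
  · intro h i
    rw [← Nat.not_even_iff_odd]
    exact h (Finset.mem_univ i)
  · intro h i _
    rw [Nat.not_even_iff_odd]
    exact h i


/-- `V n k = 4^(n-k) T(2n+1, 2k+1)` is the number of set partitions of `{1,…,2n+1}` into
`2k+1` blocks, each of odd cardinality. -/
theorem stmt18 (n k : ℕ) (hkn : k ≤ n) :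
    V n k = Nat.card {P : Finpartition (Finset.univ : Finset (Fin (2 * n + 1))) //
      P.parts.card = 2 * k + 1 ∧ ∀ B ∈ P.parts, Odd B.card} := by
  have h1 : Nat.card {f : Fin (2*n+1) → Fin (2*k+1) // ∀ i, Odd (ffib f i)} =
      (Finset.univ.filter fun f : Fin (2*n+1) → Fin (2*k+1) => fecnt f = 0).card := by
    rw [Nat.card_congr (Equiv.subtypeEquivRight (fun f => (fecnt_zero_iff f).symm))]
    rw [Nat.card_eq_fintype_card, Fintype.card_subtype]
  have h2 := card_fecnt (2*k+1) (2*n+1) 0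
  have h3 := MR_V k n
  have h4 := card_odd_fiber_functions (2*n+1) (2*k+1)
  have h5 : (2*k+1).factorial * V n k =
      (2*k+1).factorial * Nat.card (GoodParts (2*n+1) (2*k+1)) := by
    rw [← h3, ← h2, ← h1, h4]
  have h6 := Nat.eq_of_mul_eq_mul_left (Nat.factorial_pos (2*k+1)) h5
  rw [h6]
  rfl
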